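/- The square confluent Cauchy–Vandermonde matrix with entries C^{(x,p)}_{(y,q)} = binom(p+q, p) · (−1)^p / (x−y)^{p+q+1}, indexed by pairs (x,p) with x ranging over a finite set of 'pole' points and p = 0,…,n_x−1, and (y,q) with y ranging over a disjoint finite set of 'zero' points and q = 0,…,m_y−1, where Σ n_x = Σ m_y and all x ≠ y, is invertible. -/

import Mathlib

open Polynomial PowerSeries Finset

noncomputable def cvInv (a : ℂ) (q : ℕ) : ℂ⟦X⟧ :=
  PowerSeries.mk fun j => ((j + q).choose j : ℂ) * (-1) ^ j / a ^ (j + q + 1)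

lemma cvInv_eq (a : ℂ) (ha : a ≠ 0) (q : ℕ) :
    cvInv a q = PowerSeries.C (a⁻¹ ^ (q + 1)) *
      PowerSeries.rescale (-a⁻¹) ((invOneSubPow ℂ (q + 1)).val) := by
  ext j
  rw [cvInv, PowerSeries.coeff_mk, PowerSeries.coeff_C_mul, PowerSeries.coeff_rescale,
    invOneSubPow_val_succ_eq_mk_add_choose, PowerSeries.coeff_mk]
  have h : (j + q).choose q = (j + q).choose j := by
    have := Nat.choose_symm (Nat.le_add_left q j)
    simpa using this.symm
  rw [show q + j = j + q from Nat.add_comm q j, h]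
  field_simp
  have hpow : (a * a⁻¹) ^ (j + q + 1) = 1 := by rw [mul_inv_cancel₀ ha, one_pow]
  linear_combination (-(((j + q).choose j : ℂ) * (-1) ^ j)) * hpow

lemma cvInv_mul (a : ℂ) (ha : a ≠ 0) (q : ℕ) :
    cvInv a q * (PowerSeries.C a + PowerSeries.X) ^ (q + 1) = 1 := by
  have h2 : PowerSeries.rescale (-a⁻¹) (1 - PowerSeries.X) =
      1 + PowerSeries.C a⁻¹ * PowerSeries.X := by
    rw [map_sub, map_one, PowerSeries.rescale_X, map_neg, neg_mul, sub_neg_eq_add]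
  have h1 : (PowerSeries.C a + PowerSeries.X : ℂ⟦X⟧) =
      PowerSeries.C a * PowerSeries.rescale (-a⁻¹) (1 - PowerSeries.X) := by
    rw [h2, mul_add, mul_one, ← mul_assoc, ← map_mul, mul_inv_cancel₀ ha, map_one, one_mul]
  rw [cvInv_eq a ha q, h1, mul_pow, ← map_pow, mul_mul_mul_comm, ← map_mul,
    inv_pow, inv_mul_cancel₀ (pow_ne_zero _ ha), map_one, one_mul,
    ← map_pow, ← map_mul, ← invOneSubPow_inv_eq_one_sub_pow,
    (invOneSubPow ℂ (q + 1)).val_inv, map_one]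

lemma taylor_pow' (r : ℂ) (p : ℂ[X]) (k : ℕ) : taylor r (p ^ k) = (taylor r p) ^ k := by
  simpa using map_pow (taylorAlgHom r) p k

lemma key_coeff (x y : ℂ) (hxy : x - y ≠ 0) (q : ℕ) (A Qp : ℂ[X])
    (hA : (Polynomial.X - Polynomial.C y) ^ (q + 1) * A = Qp) (p : ℕ) :
    (taylor x A).coeff p = ∑ j ∈ Finset.range (p + 1),
      (((j + q).choose j : ℂ) * (-1) ^ j / (x - y) ^ (j + q + 1)) *
        (taylor x Qp).coeff (p - j) := by
  have h1 : taylor x (Polynomial.X - Polynomial.C y) = Polynomial.X + Polynomial.C (x - y) := by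
    rw [map_sub, taylor_X, taylor_C, map_sub]; ring
  have h2 : ((taylor x Qp : ℂ[X]) : ℂ⟦X⟧)
      = (PowerSeries.C (x - y) + PowerSeries.X) ^ (q + 1) *
        ((taylor x A : ℂ[X]) : ℂ⟦X⟧) := by
    rw [← hA, taylor_mul, taylor_pow', h1, Polynomial.coe_mul, Polynomial.coe_pow,
      Polynomial.coe_add, Polynomial.coe_X, Polynomial.coe_C, add_comm PowerSeries.X]
  have h3 : ((taylor x A : ℂ[X]) : ℂ⟦X⟧) =
      cvInv (x - y) q * ((taylor x Qp : ℂ[X]) : ℂ⟦X⟧) := by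
    rw [h2, ← mul_assoc, cvInv_mul _ hxy, one_mul]
  have h4 := congrArg (PowerSeries.coeff p) h3
  rw [Polynomial.coeff_coe, PowerSeries.coeff_mul,
    Finset.Nat.sum_antidiagonal_eq_sum_range_succ_mk] at h4
  simpa only [cvInv, PowerSeries.coeff_mk, Polynomial.coeff_coe] using h4

lemma cv_kernel (z ζ : Finset ℂ) (hdisj : Disjoint z ζ)
    (n m : ℂ → ℕ)
    (hsum : ∑ x ∈ z, n x = ∑ y ∈ ζ, m y)
    (v : (Σ y : {y // y ∈ ζ}, Fin (m ↑y)) → ℂ)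
    (hv : ∀ (x : {x // x ∈ z}) (p : Fin (n ↑x)),
      ∑ yq : (Σ y : {y // y ∈ ζ}, Fin (m ↑y)),
        (((p : ℕ) + (yq.2 : ℕ)).choose (p : ℕ) : ℂ) * (-1) ^ (p : ℕ) /
          ((x : ℂ) - (yq.1 : ℂ)) ^ ((p : ℕ) + (yq.2 : ℕ) + 1) * v yq = 0) :
    v = 0 := by
  classical
  funext yq₀
  obtain ⟨y₀, q₀⟩ := yq₀
  rw [Pi.zero_apply]
  set N := ∑ y ∈ ζ, m y with hN
  have hNpos : 1 ≤ N := le_trans (Fin.pos q₀) (Finset.single_le_sum (fun y _ => Nat.zero_le _) y₀.2)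
  set Q : ℂ[X] := ∏ y ∈ ζ, (Polynomial.X - Polynomial.C y) ^ m y with hQ
  set G : {y // y ∈ ζ} → ℂ[X] :=
    fun y => ∏ y' ∈ ζ.erase ↑y, (Polynomial.X - Polynomial.C y') ^ m y' with hG
  set Rp : (Σ y : {y // y ∈ ζ}, Fin (m ↑y)) → ℂ[X] := fun yq =>
    (Polynomial.X - Polynomial.C (yq.1 : ℂ)) ^ (m ↑yq.1 - ((yq.2 : ℕ) + 1)) * G yq.1 with hRp
  set P : ℂ[X] :=
    ∑ yq : (Σ y : {y // y ∈ ζ}, Fin (m ↑y)), Polynomial.C (v yq) * Rp yq with hP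
  have hGne : ∀ y : {y // y ∈ ζ}, G y ≠ 0 := fun y =>
    Finset.prod_ne_zero_iff.mpr fun y' _ => pow_ne_zero _ (Polynomial.X_sub_C_ne_zero y')
  have hGdeg : ∀ y : {y // y ∈ ζ}, (G y).natDegree = ∑ y' ∈ ζ.erase ↑y, m y' := by
    intro y
    rw [hG]
    rw [Polynomial.natDegree_prod _ _ fun y' _ => pow_ne_zero _ (Polynomial.X_sub_C_ne_zero y')]
    exact Finset.sum_congr rfl fun y' _ => by
      rw [Polynomial.natDegree_pow, Polynomial.natDegree_X_sub_C, mul_one]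
  have hQR : ∀ yq : (Σ y : {y // y ∈ ζ}, Fin (m ↑y)),
      (Polynomial.X - Polynomial.C (yq.1 : ℂ)) ^ ((yq.2 : ℕ) + 1) * Rp yq = Q := by
    rintro ⟨y, q⟩
    rw [hRp]
    dsimp only
    rw [← mul_assoc, ← pow_add, Nat.add_sub_cancel' q.2, hQ, hG]
    exact Finset.mul_prod_erase ζ (fun y' => (Polynomial.X - Polynomial.C y') ^ m y') y.2
  have hRdeg : ∀ yq : (Σ y : {y // y ∈ ζ}, Fin (m ↑y)), (Rp yq).natDegree < N := by
    rintro ⟨y, q⟩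
    rw [hRp]
    dsimp only
    rw [Polynomial.natDegree_mul (pow_ne_zero _ (Polynomial.X_sub_C_ne_zero _)) (hGne y),
      Polynomial.natDegree_pow, Polynomial.natDegree_X_sub_C, mul_one, hGdeg y, hN,
      ← Finset.add_sum_erase ζ m y.2]
    have h1 : m ↑y - ((q : ℕ) + 1) < m ↑y := Nat.sub_lt (Fin.pos q) (Nat.succ_pos _)
    omega
  have hPdeg : P.natDegree ≤ N - 1 := by
    rw [hP]
    exact Polynomial.natDegree_sum_le_of_forall_le _ _ fun yq _ =>
      (Polynomial.natDegree_C_mul_le _ _).trans (Nat.le_sub_one_of_lt (hRdeg yq))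
  have hxy : ∀ (x : {x // x ∈ z}) (y : {y // y ∈ ζ}), (x : ℂ) - (y : ℂ) ≠ 0 := by
    intro x y
    refine sub_ne_zero.mpr fun h => ?_
    exact Finset.disjoint_left.mp hdisj x.2 (h ▸ y.2)
  have hcoeff : ∀ (x : {x // x ∈ z}) (p : ℕ), p < n ↑x →
      ((taylor (↑x : ℂ)) P).coeff p = 0 := by
    intro x p hp
    rw [hP, map_sum, Polynomial.finset_sum_coeff]
    have hterm : ∀ yq : (Σ y : {y // y ∈ ζ}, Fin (m ↑y)),
        (((taylor (↑x : ℂ)) (Polynomial.C (v yq) * Rp yq)).coeff p)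
        = ∑ j ∈ Finset.range (p + 1), v yq *
            ((((j + (yq.2 : ℕ)).choose j : ℂ) * (-1) ^ j /
              ((x : ℂ) - (yq.1 : ℂ)) ^ (j + (yq.2 : ℕ) + 1)) *
              ((taylor (↑x : ℂ)) Q).coeff (p - j)) := by
      intro yq
      rw [taylor_mul, taylor_C, Polynomial.coeff_C_mul,
        key_coeff _ _ (hxy x yq.1) _ _ _ (hQR yq) p, Finset.mul_sum]
    rw [Finset.sum_congr rfl fun yq _ => hterm yq, Finset.sum_comm]
    refine Finset.sum_eq_zero fun j hj => ?_
    have hj' : j < n ↑x := by have := Finset.mem_range.mp hj; omega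
    have h0 := hv x ⟨j, hj'⟩
    have hswap : ∑ yq : (Σ y : {y // y ∈ ζ}, Fin (m ↑y)), v yq *
          ((((j + (yq.2 : ℕ)).choose j : ℂ) * (-1) ^ j /
            ((x : ℂ) - (yq.1 : ℂ)) ^ (j + (yq.2 : ℕ) + 1)) *
            ((taylor (↑x : ℂ)) Q).coeff (p - j))
        = (∑ yq : (Σ y : {y // y ∈ ζ}, Fin (m ↑y)),
            (((j + (yq.2 : ℕ)).choose j : ℂ) * (-1) ^ j /
              ((x : ℂ) - (yq.1 : ℂ)) ^ (j + (yq.2 : ℕ) + 1)) * v yq) *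
            ((taylor (↑x : ℂ)) Q).coeff (p - j) := by
      rw [Finset.sum_mul]
      exact Finset.sum_congr rfl fun yq _ => by ring
    rw [hswap, h0, zero_mul]
  have hdvd : ∀ x ∈ z, (Polynomial.X - Polynomial.C x) ^ n x ∣ P := by
    intro x hx
    obtain ⟨g, hg⟩ := Polynomial.X_pow_dvd_iff.mpr fun d hd => hcoeff ⟨x, hx⟩ d hd
    refine ⟨taylor (-x) g, ?_⟩
    have hid : P = taylor (-x) (taylor x P) := by
      rw [taylor_taylor, neg_add_cancel, taylor_zero]
    rw [hid, hg, taylor_mul, taylor_pow', taylor_X, Polynomial.C_neg, ← sub_eq_add_neg]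
  have hWdvd : (∏ x ∈ z, (Polynomial.X - Polynomial.C x) ^ n x) ∣ P := by
    refine Finset.prod_dvd_of_coprime (fun a ha b hb hab => ?_) hdvd
    exact (Polynomial.isCoprime_X_sub_C_of_isUnit_sub
      ((sub_ne_zero.mpr hab).isUnit)).pow
  have hWdeg : (∏ x ∈ z, (Polynomial.X - Polynomial.C x) ^ n x).natDegree = N := by
    rw [Polynomial.natDegree_prod _ _ fun x _ => pow_ne_zero _ (Polynomial.X_sub_C_ne_zero x),
      ← hsum]
    exact Finset.sum_congr rfl fun x _ => by
      rw [Polynomial.natDegree_pow, Polynomial.natDegree_X_sub_C, mul_one]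
  have hP0 : P = 0 := by
    by_contra h
    have h1 := Polynomial.natDegree_le_of_dvd hWdvd h
    rw [hWdeg] at h1
    omega
  set S : ℂ[X] := ∑ q : Fin (m ↑y₀), Polynomial.C (v ⟨y₀, q⟩) *
    (Polynomial.X - Polynomial.C (↑y₀ : ℂ)) ^ (m ↑y₀ - ((q : ℕ) + 1)) with hS
  have hPsplit : P = ∑ y : {y // y ∈ ζ}, (∑ q : Fin (m ↑y), Polynomial.C (v ⟨y, q⟩) *
      (Polynomial.X - Polynomial.C (↑y : ℂ)) ^ (m ↑y - ((q : ℕ) + 1))) * G y := by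
    rw [hP, ← Finset.univ_sigma_univ, Finset.sum_sigma]
    refine Finset.sum_congr rfl fun y _ => ?_
    rw [Finset.sum_mul]
    exact Finset.sum_congr rfl fun q _ => by rw [hRp]; ring
  have hdvd0 : (Polynomial.X - Polynomial.C (↑y₀ : ℂ)) ^ (m ↑y₀) ∣ S * G y₀ := by
    have hsplit2 : S * G y₀ + ∑ y ∈ Finset.univ.erase y₀,
        (∑ q : Fin (m ↑y), Polynomial.C (v ⟨y, q⟩) *
          (Polynomial.X - Polynomial.C (↑y : ℂ)) ^ (m ↑y - ((q : ℕ) + 1))) * G y = P := by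
      rw [hPsplit, hS]
      exact Finset.add_sum_erase _ (fun y : {y // y ∈ ζ} => (∑ q : Fin (m ↑y),
        Polynomial.C (v ⟨y, q⟩) *
          (Polynomial.X - Polynomial.C (↑y : ℂ)) ^ (m ↑y - ((q : ℕ) + 1))) * G y)
        (Finset.mem_univ y₀)
    have h2 : S * G y₀ = -(∑ y ∈ Finset.univ.erase y₀,
        (∑ q : Fin (m ↑y), Polynomial.C (v ⟨y, q⟩) *
          (Polynomial.X - Polynomial.C (↑y : ℂ)) ^ (m ↑y - ((q : ℕ) + 1))) * G y) := by
      rw [hP0] at hsplit2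
      linear_combination hsplit2
    rw [h2]
    refine dvd_neg.mpr (Finset.dvd_sum fun y hy => Dvd.dvd.mul_left ?_ _)
    rw [hG]
    have hmem : (↑y₀ : ℂ) ∈ ζ.erase ↑y := Finset.mem_erase.mpr
      ⟨fun hc => (Finset.mem_erase.mp hy).1 (Subtype.ext hc.symm), y₀.2⟩
    exact Finset.dvd_prod_of_mem _ hmem
  have hcop : IsCoprime ((Polynomial.X - Polynomial.C (↑y₀ : ℂ)) ^ (m ↑y₀)) (G y₀) := by
    refine IsCoprime.pow_left (IsCoprime.prod_right fun y' hy' => IsCoprime.pow_right ?_)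
    exact Polynomial.isCoprime_X_sub_C_of_isUnit_sub
      ((sub_ne_zero.mpr fun hc => (Finset.mem_erase.mp hy').1 hc.symm).isUnit)
  have hdvdS : (Polynomial.X - Polynomial.C (↑y₀ : ℂ)) ^ (m ↑y₀) ∣ S :=
    hcop.dvd_of_dvd_mul_right hdvd0
  have hS0 : S = 0 := by
    by_contra h
    have h1 := Polynomial.natDegree_le_of_dvd hdvdS h
    rw [Polynomial.natDegree_pow, Polynomial.natDegree_X_sub_C, mul_one] at h1
    have h2 : S.natDegree ≤ m ↑y₀ - 1 := by
      rw [hS]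
      refine Polynomial.natDegree_sum_le_of_forall_le _ _ fun q _ =>
        (Polynomial.natDegree_C_mul_le _ _).trans ?_
      rw [Polynomial.natDegree_pow, Polynomial.natDegree_X_sub_C, mul_one]
      have := Fin.pos q
      omega
    have := Fin.pos q₀
    omega
  have h3 := congrArg
    (fun p : ℂ[X] => ((taylor (↑y₀ : ℂ)) p).coeff (m ↑y₀ - ((q₀ : ℕ) + 1))) hS0
  simp only [map_zero, Polynomial.coeff_zero] at h3
  rw [hS, map_sum, Polynomial.finset_sum_coeff] at h3
  have hterm : ∀ q : Fin (m ↑y₀),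
      (((taylor (↑y₀ : ℂ)) (Polynomial.C (v ⟨y₀, q⟩) *
        (Polynomial.X - Polynomial.C (↑y₀ : ℂ)) ^ (m ↑y₀ - ((q : ℕ) + 1)))).coeff
          (m ↑y₀ - ((q₀ : ℕ) + 1)))
      = if q = q₀ then v ⟨y₀, q⟩ else 0 := by
    intro q
    rw [taylor_mul, taylor_C, taylor_pow', map_sub, taylor_X, taylor_C,
      add_sub_cancel_right, Polynomial.coeff_C_mul, Polynomial.coeff_X_pow]
    by_cases hq : q = q₀
    · subst hq; simp
    · have hne : ¬(m ↑y₀ - ((q₀ : ℕ) + 1) = m ↑y₀ - ((q : ℕ) + 1)) := by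
        have h1 := q.2
        have h2 := q₀.2
        intro hcontra
        exact hq (Fin.ext (by omega))
      simp [hq, hne]
  rw [Finset.sum_congr rfl fun q _ => hterm q, Finset.sum_ite_eq' Finset.univ q₀] at h3
  simpa using h3



/-- The square confluent Cauchy–Vandermonde matrix, with rows indexed by pairs `(x, p)`
(`x` in a finite set of poles, `0 ≤ p < n x`), columns indexed by pairs `(y, q)`
(`y` in a disjoint finite set of zeroes, `0 ≤ q < m y`), with `∑ n x = ∑ m y` and entries
`C (x,p) (y,q) = (p+q choose p) * (-1)^p / (x - y)^(p+q+1)`, is invertible. -/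
theorem stmt_5 (z ζ : Finset ℂ) (hdisj : Disjoint z ζ)
    (n m : ℂ → ℕ) (hn : ∀ x ∈ z, 1 ≤ n x) (hm : ∀ y ∈ ζ, 1 ≤ m y)
    (hsum : ∑ x ∈ z, n x = ∑ y ∈ ζ, m y)
    (C : Matrix (Σ x : {x // x ∈ z}, Fin (n ↑x)) (Σ y : {y // y ∈ ζ}, Fin (m ↑y)) ℂ)
    (hC : ∀ xp yq, C xp yq =
      (Nat.choose ((xp.2 : ℕ) + (yq.2 : ℕ)) (xp.2 : ℕ) : ℂ) * (-1) ^ (xp.2 : ℕ)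
        / (((xp.1 : ℂ)) - ((yq.1 : ℂ))) ^ ((xp.2 : ℕ) + (yq.2 : ℕ) + 1)) :
    Function.Bijective C.mulVecLin := by
    classical
  have hker : ∀ v, C.mulVecLin v = 0 → v = 0 := by
    intro v hv0
    apply cv_kernel z ζ hdisj n m hsum v
    intro x p
    have h := congrFun hv0 ⟨x, p⟩
    rw [Matrix.mulVecLin_apply, Pi.zero_apply] at h
    rw [← h, Matrix.mulVec, dotProduct]
    exact Finset.sum_congr rfl fun yq _ => by rw [hC ⟨x, p⟩ yq]
  have hinj : Function.Injective C.mulVecLin :=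
    (injective_iff_map_eq_zero C.mulVecLin).mpr hker
  refine ⟨hinj, ?_⟩
  have hdim : Module.finrank ℂ ((Σ y : {y // y ∈ ζ}, Fin (m ↑y)) → ℂ)
      = Module.finrank ℂ ((Σ x : {x // x ∈ z}, Fin (n ↑x)) → ℂ) := by
    rw [Module.finrank_pi, Module.finrank_pi, Fintype.card_sigma, Fintype.card_sigma]
    simp only [Fintype.card_fin]
    rw [Finset.sum_coe_sort ζ m, Finset.sum_coe_sort z n, hsum]
  exact (LinearMap.injective_iff_surjective_of_finrank_eq_finrank hdim).mp hinj
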